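/- Let ρ = (11/2, 5/2, 3/2, 1/2) be the half-sum of the positive system Δ⁺(F4) = {e_i : 1≤i≤4} ∪ {e_i±e_j : 1≤i<j≤4} ∪ {(e₁±e₂±e₃±e₄)/2} of Δ(F4), let μ₁ = 2ϖ₂+4ϖ₄ = (3,1,1,1) and μ₂ = 3ϖ₃+ϖ₄ = (2,−1,3,0) (the two spin-lowest K-types of the FS-scattered Dirac series of F₄₍₄₎ with atlas parameter x=176). Then there exist elements w, w′ of the Weyl group W(F4) (the group generated by the reflections of ℝ⁴ in the elements of Δ(F4)) such that: det(w) = 1, det(w′) = −1, both wρ and w′ρ are Δ⁺(k)-dominant, and the unique Δ⁺(k)-dominant element of the W(k)-orbit of μ₁ − (wρ − ρ_c) and the unique Δ⁺(k)-dominant element of the W(k)-orbit of μ₂ − (w′ρ − ρ_c) are both equal to ϖ₄ = (1/2,1/2,0,0). (Explicit witnesses: w = s_{α₄}s_{α₃} and w′ = s_{α₄}s_{α₃}s_{α₂}s_{α₁}s_{α₃}s_{α₂}s_{α₃}, where s_α is the reflection in α and α₁=(e₁−e₂−e₃−e₄)/2, α₂=e₄, α₃=e₃−e₄, α₄=e₂−e₃;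 then wρ−ρ_c = 2ϖ₂+5ϖ₄ and w′ρ−ρ_c = 3ϖ₃. This computation shows that the even and the odd part of the Dirac cohomology of this representation share the K̃-type with highest weight ϖ₄, disproving the 2015 conjecture that no such cancellation occurs.) -/

import Mathlib

/-!
The even and odd parts of the Dirac cohomology of the FS-scattered Dirac series of
F₄₍₄₎ with atlas parameter `x = 176` share the K̃-type with highest weight `ϖ₄`:
there are Weyl group elements `w, w'` of determinants `1` and `−1` with `wρ, w'ρ`
dominant for `Δ⁺(k)` such that the dominant `W(k)`-conjugates of
`μ₁ − (wρ − ρ_c)` and `μ₂ − (w'ρ − ρ_c)` are both `ϖ₄`.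
-/

noncomputable section

open scoped RealInnerProductSpace

namespace Stmt4

abbrev V4 : Type := EuclideanSpace ℝ (Fin 4)

def e (i : Fin 4) : V4 := EuclideanSpace.single i 1

def vec (a b c d : ℝ) : V4 := (WithLp.equiv 2 (Fin 4 → ℝ)).symm ![a, b, c, d]

/-- The root system of type `F₄` in `ℝ⁴`. -/
def ΔF4 : Set V4 :=
  {v | (∃ i, v = e i ∨ v = -e i) ∨
       (∃ i j, i < j ∧ (v = e i + e j ∨ v = e i - e j ∨ v = -e i + e j ∨ v = -e i - e j)) ∨
       (∃ s : Fin 4 → ℝ, (∀ i, s i = 1 ∨ s i = -1) ∧ v = (1 / 2 : ℝ) • ∑ i, s i • e i)}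

/-- `w` is the reflection in a root `α ∈ Δ`. -/
def IsReflIn (Δ : Set V4) (w : V4 ≃ₗᵢ[ℝ] V4) : Prop :=
  ∃ α ∈ Δ, ∀ x : V4, w x = x - (2 * ⟪x, α⟫ / ⟪α, α⟫) • α

/-- The group generated by the reflections in the elements of `Δ`. -/
def WeylGroup (Δ : Set V4) : Subgroup (V4 ≃ₗᵢ[ℝ] V4) :=
  Subgroup.closure {w | IsReflIn Δ w}

/-- `ξ` is dominant with respect to the positive roots `Δplus`. -/
def IsDom (Δplus : Set V4) (ξ : V4) : Prop := ∀ γ ∈ Δplus, 0 ≤ ⟪ξ, γ⟫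

/-- The compact roots for F₄₍₄₎: `±(e₁+e₂)` together with the roots in the
hyperplane `x₁ + x₂ = 0` (a system of type C₃ × A₁). -/
def Δk : Set V4 :=
  {v ∈ ΔF4 | v = e 0 + e 1 ∨ v = -(e 0 + e 1) ∨ v 0 + v 1 = 0}

/-- The simple roots `γ₁=(e₁−e₂−e₃−e₄)/2, γ₂=e₄, γ₃=e₃−e₄, γ₄=e₁+e₂` of `Δ⁺(k)`. -/
def γ : Fin 4 → V4 :=
  ![vec (1/2) (-1/2) (-1/2) (-1/2), vec 0 0 0 1, vec 0 0 1 (-1), vec 1 1 0 0]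

/-- The positive compact roots. -/
def Δplusk : Set V4 := {v ∈ Δk | ∃ n : Fin 4 → ℕ, v = ∑ j, (n j : ℝ) • γ j}

/-- Half sum of the positive compact roots. -/
def ρc : V4 := vec 2 (-1) (3/2) (1/2)

/-- Half sum of the positive system `Δ⁺(F₄)`. -/
def ρ : V4 := vec (11/2) (5/2) (3/2) (1/2)

/-- `μ₁ = 2ϖ₂ + 4ϖ₄ = (3,1,1,1)`, a spin-lowest K-type of the representation. -/
def μ1 : V4 := vec 3 1 1 1

/-- `μ₂ = 3ϖ₃ + ϖ₄ = (2,−1,3,0)`, the other spin-lowest K-type. -/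
def μ2 : V4 := vec 2 (-1) 3 0

/-- `ϖ₄ = (1/2,1/2,0,0)`. -/
def ϖ4 : V4 := vec (1/2) (1/2) 0 0

/-- The determinant of a linear isometry of `ℝ⁴`. -/
def dets (w : V4 ≃ₗᵢ[ℝ] V4) : ℝ := LinearMap.det (w.toLinearEquiv : V4 →ₗ[ℝ] V4)



/-! ### Auxiliary machinery -/

/-- Reflection in the hyperplane orthogonal to `v`. -/
def rfl' (v : V4) : V4 ≃ₗᵢ[ℝ] V4 := Submodule.reflection ((ℝ ∙ v)ᗮ)

lemma rfl'_apply (v x : V4) : rfl' v x = x - (2 * ⟪x, v⟫ / ⟪v, v⟫) • v := by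
  rw [rfl', Submodule.reflection_orthogonal_apply, Submodule.reflection_singleton_apply]
  rw [real_inner_comm x v, real_inner_self_eq_norm_sq]
  rw [neg_sub, two_smul, ← add_smul]
  ring_nf
  norm_cast

lemma rfl'_mem {Δ : Set V4} {v : V4} (hv : v ∈ Δ) : rfl' v ∈ WeylGroup Δ :=
  Subgroup.subset_closure ⟨v, hv, rfl'_apply v⟩

lemma inner_vec (a b c d a' b' c' d' : ℝ) :
    ⟪vec a b c d, vec a' b' c' d'⟫ = a*a' + b*b' + c*c' + d*d' := by
  simp [vec, PiLp.inner_apply, RCLike.inner_apply, Fin.sum_univ_four]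
  ring

lemma vec_sub_smul (r a b c d x1 x2 x3 x4 : ℝ) :
    vec x1 x2 x3 x4 - r • vec a b c d = vec (x1 - r*a) (x2 - r*b) (x3 - r*c) (x4 - r*d) := by
  ext i; fin_cases i <;> simp [vec]

lemma vec_sub (a b c d x1 x2 x3 x4 : ℝ) :
    vec x1 x2 x3 x4 - vec a b c d = vec (x1 - a) (x2 - b) (x3 - c) (x4 - d) := by
  ext i; fin_cases i <;> simp [vec]

lemma rfl'_vec (a b c d x1 x2 x3 x4 : ℝ) :
    rfl' (vec a b c d) (vec x1 x2 x3 x4) =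
      vec (x1 - (2*(x1*a+x2*b+x3*c+x4*d)/(a*a+b*b+c*c+d*d))*a)
          (x2 - (2*(x1*a+x2*b+x3*c+x4*d)/(a*a+b*b+c*c+d*d))*b)
          (x3 - (2*(x1*a+x2*b+x3*c+x4*d)/(a*a+b*b+c*c+d*d))*c)
          (x4 - (2*(x1*a+x2*b+x3*c+x4*d)/(a*a+b*b+c*c+d*d))*d) := by
  rw [rfl'_apply, inner_vec, inner_vec, vec_sub_smul]

lemma vec_ne_zero {a b c d : ℝ} (h : a*a + b*b + c*c + d*d ≠ 0) : vec a b c d ≠ 0 := by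
  intro hv
  exact h (by rw [← inner_vec a b c d a b c d, hv, inner_zero_left])

lemma dets_mul (w1 w2 : V4 ≃ₗᵢ[ℝ] V4) : dets (w1 * w2) = dets w1 * dets w2 := by
  unfold dets
  rw [← LinearMap.det_comp]
  rfl

lemma dets_rfl' {v : V4} (hv : v ≠ 0) : dets (rfl' v) = -1 := by
  have h := Submodule.det_reflection ((ℝ ∙ v)ᗮ)
  rw [Submodule.orthogonal_orthogonal, finrank_span_singleton hv, pow_one] at h
  exact h

/-- The four roots used for `w` and `w'`. -/
def a1 : V4 := vec (1/2) (-1/2) (-1/2) (-1/2)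
def a2 : V4 := vec 0 0 0 1
def a3 : V4 := vec 0 0 1 (-1)
def a4 : V4 := vec 0 1 (-1) 0

lemma vec_eq_comb (a b c d : ℝ) :
    vec a b c d = a • e 0 + b • e 1 + c • e 2 + d • e 3 := by
  ext i; fin_cases i <;> simp [vec, e]

lemma a1_mem : a1 ∈ ΔF4 := by
  refine Or.inr (Or.inr ⟨![1, -1, -1, -1], fun i => by fin_cases i <;> simp, ?_⟩)
  rw [Fin.sum_univ_four]
  show a1 = (1/2 : ℝ) • ((1:ℝ) • e 0 + (-1:ℝ) • e 1 + (-1:ℝ) • e 2 + (-1:ℝ) • e 3)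
  rw [a1, vec_eq_comb, smul_add, smul_add, smul_add, smul_smul, smul_smul, smul_smul, smul_smul]
  norm_num

lemma a2_mem : a2 ∈ ΔF4 := by
  refine Or.inl ⟨3, Or.inl ?_⟩
  rw [a2, vec_eq_comb]
  simp

lemma a3_mem : a3 ∈ ΔF4 := by
  refine Or.inr (Or.inl ⟨2, 3, by decide, Or.inr (Or.inl ?_)⟩)
  rw [a3, vec_eq_comb]
  simp
  abel

lemma a4_mem : a4 ∈ ΔF4 := by
  refine Or.inr (Or.inl ⟨1, 2, by decide, Or.inr (Or.inl ?_)⟩)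
  rw [a4, vec_eq_comb]
  simp
  abel

lemma g4_eq : vec 1 1 0 0 = e 0 + e 1 := by
  rw [vec_eq_comb]; simp

lemma g4_mem : vec 1 1 0 0 ∈ Δk :=
  ⟨Or.inr (Or.inl ⟨0, 1, by decide, Or.inl g4_eq⟩), Or.inl g4_eq⟩

lemma γ0_eq : γ 0 = vec (1/2) (-1/2) (-1/2) (-1/2) := rfl
lemma γ1_eq : γ 1 = vec 0 0 0 1 := rfl
lemma γ2_eq : γ 2 = vec 0 0 1 (-1) := rfl
lemma γ3_eq : γ 3 = vec 1 1 0 0 := rfl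

lemma isDom_vec {x1 x2 x3 x4 : ℝ} (h0 : 0 ≤ x1 - x2 - x3 - x4) (h1 : 0 ≤ x4)
    (h2 : 0 ≤ x3 - x4) (h3 : 0 ≤ x1 + x2) : IsDom Δplusk (vec x1 x2 x3 x4) := by
  rintro v ⟨-, n, rfl⟩
  rw [inner_sum]
  refine Finset.sum_nonneg fun j _ => ?_
  rw [real_inner_smul_right]
  refine mul_nonneg (Nat.cast_nonneg _) ?_
  fin_cases j
  · show (0:ℝ) ≤ ⟪vec x1 x2 x3 x4, γ 0⟫
    rw [γ0_eq, inner_vec]; linarith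
  · show (0:ℝ) ≤ ⟪vec x1 x2 x3 x4, γ 1⟫
    rw [γ1_eq, inner_vec]; linarith
  · show (0:ℝ) ≤ ⟪vec x1 x2 x3 x4, γ 2⟫
    rw [γ2_eq, inner_vec]; linarith
  · show (0:ℝ) ≤ ⟪vec x1 x2 x3 x4, γ 3⟫
    rw [γ3_eq, inner_vec]; linarith

lemma a1_ne : a1 ≠ 0 := vec_ne_zero (by norm_num)
lemma a2_ne : a2 ≠ 0 := vec_ne_zero (by norm_num)
lemma a3_ne : a3 ≠ 0 := vec_ne_zero (by norm_num)
lemma a4_ne : a4 ≠ 0 := vec_ne_zero (by norm_num)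

/-- There exist `w, w' ∈ W(F₄)` with `det w = 1`, `det w' = −1`, `wρ` and `w'ρ`
`Δ⁺(k)`-dominant, such that the unique `Δ⁺(k)`-dominant elements of the
`W(k)`-orbits of `μ₁ − (wρ − ρ_c)` and of `μ₂ − (w'ρ − ρ_c)` both equal `ϖ₄`. -/
theorem dirac_index_cancellation_FI :
    ∃ w ∈ WeylGroup ΔF4, ∃ w' ∈ WeylGroup ΔF4,
      dets w = 1 ∧ dets w' = -1 ∧
      IsDom Δplusk (w ρ) ∧ IsDom Δplusk (w' ρ) ∧
      IsDom Δplusk ϖ4 ∧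
      (∃ u ∈ WeylGroup Δk, u (μ1 - (w ρ - ρc)) = ϖ4) ∧
      (∃ u' ∈ WeylGroup Δk, u' (μ2 - (w' ρ - ρc)) = ϖ4) := by
  have hw : (rfl' a4 * rfl' a3) ρ = vec (11/2) (1/2) (5/2) (3/2) := by
    show rfl' a4 (rfl' a3 ρ) = _
    unfold ρ a3 a4
    rw [rfl'_vec]; norm_num
    rw [rfl'_vec]; norm_num
  have hw' : (rfl' a4 * rfl' a3 * rfl' a2 * rfl' a1 * rfl' a3 * rfl' a2 * rfl' a3) ρ
      = vec (7/2) (-5/2) (9/2) (1/2) := by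
    show rfl' a4 (rfl' a3 (rfl' a2 (rfl' a1 (rfl' a3 (rfl' a2 (rfl' a3 ρ)))))) = _
    unfold ρ a1 a2 a3 a4
    rw [rfl'_vec]; norm_num
    rw [rfl'_vec]; norm_num
    rw [rfl'_vec]; norm_num
    rw [rfl'_vec]; norm_num
    rw [rfl'_vec]; norm_num
    rw [rfl'_vec]; norm_num
    rw [rfl'_vec]; norm_num
  refine ⟨rfl' a4 * rfl' a3, mul_mem (rfl'_mem a4_mem) (rfl'_mem a3_mem),
    rfl' a4 * rfl' a3 * rfl' a2 * rfl' a1 * rfl' a3 * rfl' a2 * rfl' a3,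
    mul_mem (mul_mem (mul_mem (mul_mem (mul_mem (mul_mem (rfl'_mem a4_mem) (rfl'_mem a3_mem))
      (rfl'_mem a2_mem)) (rfl'_mem a1_mem)) (rfl'_mem a3_mem)) (rfl'_mem a2_mem))
      (rfl'_mem a3_mem), ?_, ?_, ?_, ?_, ?_, ?_, ?_⟩
  · rw [dets_mul, dets_rfl' a4_ne, dets_rfl' a3_ne]
    norm_num
  · rw [dets_mul, dets_mul, dets_mul, dets_mul, dets_mul, dets_mul,
      dets_rfl' a4_ne, dets_rfl' a3_ne, dets_rfl' a2_ne, dets_rfl' a1_ne]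
    norm_num
  · rw [hw]
    exact isDom_vec (by norm_num) (by norm_num) (by norm_num) (by norm_num)
  · rw [hw']
    exact isDom_vec (by norm_num) (by norm_num) (by norm_num) (by norm_num)
  · unfold ϖ4
    exact isDom_vec (by norm_num) (by norm_num) (by norm_num) (by norm_num)
  · refine ⟨rfl' (vec 1 1 0 0), rfl'_mem g4_mem, ?_⟩
    rw [hw]
    unfold μ1 ρc ϖ4
    rw [vec_sub, vec_sub]
    norm_num
    rw [rfl'_vec]
    norm_num
  · refine ⟨1, one_mem _, ?_⟩
    show μ2 - (_ - ρc) = ϖ4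
    rw [hw']
    unfold μ2 ρc ϖ4
    rw [vec_sub, vec_sub]
    norm_num

end Stmt4
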